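/- arXiv:1303.7020 — 2 statements merged into one kernel-verified Lean document; each statement's English description precedes it below -/
import Mathlib

section
/- Let C ⊆ F_p^n be a code and define f : F_p^n → ℂ by f(y) = Σ_{c ∈ C} ω^{c·y}, where ω = exp(2πi/p). If f vanishes on the complement of a proper linear subspace V_0 < F_p^n, then there exists a nonzero vector s ∈ F_p^n with C + s = C. -/
open Finset

noncomputable def omegaP (p : ℕ) : ℂ := Complex.exp (2 * Real.pi * Complex.I / p)

def dotp {p n : ℕ} (x y : Fin n → ZMod p) : ZMod p := ∑ i, x i * y i

noncomputable def fsum {p n : ℕ} (C : Finset (Fin n → ZMod p)) (y : Fin n → ZMod p) : ℂ :=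
  ∑ c ∈ C, omegaP p ^ (dotp c y).val

section aux
variable {p n : ℕ} [Fact p.Prime]

noncomputable def chi (p : ℕ) (t : ZMod p) : ℂ := omegaP p ^ t.val

lemma omega_prim (p : ℕ) [Fact p.Prime] : IsPrimitiveRoot (omegaP p) p := by
  simpa [omegaP] using Complex.isPrimitiveRoot_exp p (Fact.out : p.Prime).ne_zero

lemma chi_zero : chi p 0 = 1 := by simp [chi, ZMod.val_zero]

lemma chi_add (a b : ZMod p) : chi p (a + b) = chi p a * chi p b := by
  have h1 : omegaP p ^ p = 1 := (omega_prim p).pow_eq_one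
  rw [chi, chi, chi, ← pow_add, ZMod.val_add]
  conv_rhs => rw [← Nat.mod_add_div (a.val + b.val) p]
  rw [pow_add, pow_mul, h1, one_pow, mul_one]

lemma chi_sum {ι : Type*} (s : Finset ι) (f : ι → ZMod p) :
    chi p (∑ i ∈ s, f i) = ∏ i ∈ s, chi p (f i) := by
  classical
  induction s using Finset.induction with
  | empty => simp [chi_zero]
  | insert hx ih => simp_all [chi_add]

lemma sum_chi : ∑ t : ZMod p, chi p t = 0 := by
  have hp : 1 < p := (Fact.out : p.Prime).one_lt
  have h := (omega_prim p).geom_sum_eq_zero hp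
  rw [← h]
  refine Finset.sum_nbij' (fun t => t.val) (fun j => (j : ZMod p)) ?_ ?_ ?_ ?_ ?_
  · intro t _; exact Finset.mem_range.mpr (ZMod.val_lt t)
  · intro j _; exact Finset.mem_univ _
  · intro t _; simp [ZMod.natCast_val, ZMod.cast_id]
  · intro j hj; exact ZMod.val_cast_of_lt (Finset.mem_range.mp hj)
  · intro t _; rfl

lemma sum_chi_mul (a : ZMod p) (ha : a ≠ 0) : ∑ t : ZMod p, chi p (a * t) = 0 := by
  have := Equiv.sum_comp (Equiv.mulLeft₀ a ha) (fun t => chi p t)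
  simpa using this.trans sum_chi

lemma sum_chi_dot (v : Fin n → ZMod p) (hv : v ≠ 0) :
    ∑ y : Fin n → ZMod p, chi p (dotp v y) = 0 := by
  classical
  have h : ∑ y : Fin n → ZMod p, chi p (dotp v y)
      = ∏ i, ∑ t : ZMod p, chi p (v i * t) := by
    rw [Fintype.prod_sum (fun i t => chi p (v i * t))]
    exact Finset.sum_congr rfl fun y _ => chi_sum _ _
  rw [h]
  obtain ⟨i0, hi0⟩ : ∃ i, v i ≠ 0 := by
    by_contra hc; push_neg at hc; exact hv (funext hc)
  exact Finset.prod_eq_zero (Finset.mem_univ i0) (sum_chi_mul _ hi0)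

lemma sum_chi_dot_eq (c x : Fin n → ZMod p) :
    ∑ y : Fin n → ZMod p, chi p (dotp (c - x) y)
      = if c = x then (p : ℂ) ^ n else 0 := by
  by_cases h : c = x
  · simp [h, dotp, chi_zero, Finset.card_univ, Fintype.card_fun, ZMod.card]
  · rw [if_neg h]
    exact sum_chi_dot _ (sub_ne_zero.mpr h)

lemma dotp_sub (c x y : Fin n → ZMod p) : dotp (c - x) y = dotp c y - dotp x y := by
  simp [dotp, sub_mul, Finset.sum_sub_distrib]

lemma dotp_add (c x y : Fin n → ZMod p) : dotp (c + x) y = dotp c y + dotp x y := by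
  simp [dotp, add_mul, Finset.sum_add_distrib]

end aux

/-- Lemma (vanishing character sum), first part: if `f` vanishes outside a proper subspace
`V₀ < F_p^n`, then `C` is invariant under translation by some nonzero vector `s`. -/
theorem stmt1 (p n : ℕ) [Fact p.Prime] (C : Finset (Fin n → ZMod p))
    (V0 : Submodule (ZMod p) (Fin n → ZMod p)) (hV0 : V0 ≠ ⊤)
    (hf : ∀ y ∉ V0, fsum C y = 0) :
    ∃ s : Fin n → ZMod p, s ≠ 0 ∧ C.image (fun c => c + s) = C := by
  classical
  obtain ⟨φ, hφne, hφbot⟩ := V0.exists_dual_map_eq_bot_of_lt_top (lt_top_iff_ne_top.mpr hV0)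
    inferInstance
  have hφ0 : ∀ y ∈ V0, φ y = 0 := by
    intro y hy
    have h : φ y ∈ V0.map φ := Submodule.mem_map_of_mem hy
    rwa [hφbot, Submodule.mem_bot] at h
  set s : Fin n → ZMod p := fun i => φ (fun j => if i = j then 1 else 0) with hs
  have hφeq : ∀ y, φ y = dotp s y := by
    intro y
    conv_lhs => rw [pi_eq_sum_univ y]
    rw [map_sum, dotp]
    exact Finset.sum_congr rfl fun i _ => by rw [map_smul, smul_eq_mul, mul_comm]
  have hsne : s ≠ 0 := by
    intro h
    exact hφne (LinearMap.ext fun y => by rw [hφeq y, h]; simp [dotp])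
  -- Fourier inversion
  have key : ∀ x : Fin n → ZMod p,
      (∑ y : Fin n → ZMod p, fsum C y * chi p (0 - dotp x y))
        = if x ∈ C then (p : ℂ) ^ n else 0 := by
    intro x
    have h1 : ∀ y, fsum C y * chi p (0 - dotp x y) = ∑ c ∈ C, chi p (dotp (c - x) y) := by
      intro y
      rw [fsum, Finset.sum_mul]
      refine Finset.sum_congr rfl fun c _ => ?_
      have : dotp (c - x) y = dotp c y + (0 - dotp x y) := by rw [dotp_sub]; ring
      rw [this, chi_add]; rfl
    calc (∑ y : Fin n → ZMod p, fsum C y * chi p (0 - dotp x y))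
        = ∑ y : Fin n → ZMod p, ∑ c ∈ C, chi p (dotp (c - x) y) :=
          Finset.sum_congr rfl fun y _ => h1 y
      _ = ∑ c ∈ C, ∑ y : Fin n → ZMod p, chi p (dotp (c - x) y) := Finset.sum_comm
      _ = ∑ c ∈ C, if c = x then (p : ℂ) ^ n else 0 :=
          Finset.sum_congr rfl fun c _ => sum_chi_dot_eq c x
      _ = if x ∈ C then (p : ℂ) ^ n else 0 := by rw [Finset.sum_ite_eq' C x (fun _ => _)]
  -- translation invariance of the Fourier transform
  have trans : ∀ x : Fin n → ZMod p,
      (∑ y : Fin n → ZMod p, fsum C y * chi p (0 - dotp (x + s) y))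
        = ∑ y : Fin n → ZMod p, fsum C y * chi p (0 - dotp x y) := by
    intro x
    refine Finset.sum_congr rfl fun y _ => ?_
    by_cases hy : y ∈ V0
    · have hsy : dotp s y = 0 := (hφeq y).symm.trans (hφ0 y hy)
      rw [dotp_add, hsy, add_zero]
    · rw [hf y hy, zero_mul, zero_mul]
  have hpn : ((p : ℂ) ^ n) ≠ 0 := by
    have : (p : ℂ) ≠ 0 := Nat.cast_ne_zero.mpr (Fact.out : p.Prime).ne_zero
    exact pow_ne_zero _ this
  have mem_iff : ∀ x : Fin n → ZMod p, x + s ∈ C ↔ x ∈ C := by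
    intro x
    have h := (key (x + s)).symm.trans ((trans x).trans (key x))
    constructor
    · intro h1; by_contra h2; rw [if_pos h1, if_neg h2] at h; exact hpn h
    · intro h2; by_contra h1; rw [if_neg h1, if_pos h2] at h; exact hpn h.symm
  refine ⟨s, hsne, ?_⟩
  ext c
  simp only [Finset.mem_image]
  constructor
  · rintro ⟨a, ha, rfl⟩
    exact (mem_iff a).mpr ha
  · intro hc
    exact ⟨c - s, (mem_iff (c - s)).mp (by rwa [sub_add_cancel]), sub_add_cancel c s⟩
end

section
/- Let C ⊆ F_p^n be nonempty with translation-symmetry subspace T = {s : C+s = C} = {0}. Then the support of the character sum f(y) = Σ_{c∈C} ω^{c·y} is not contained in any proper linear subspace of F_p^n. -/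
open Finset

section Aux

variable {p n : ℕ} [Fact p.Prime]

lemma omegaP_prim : IsPrimitiveRoot (omegaP p) p :=
  Complex.isPrimitiveRoot_exp p (Fact.out (p := p.Prime)).ne_zero

/-- abbreviation: `e a = ω^a.val`. -/
noncomputable def eP (p : ℕ) (a : ZMod p) : ℂ := omegaP p ^ a.val

lemma omegaP_pow_mod (m : ℕ) : omegaP p ^ (m % p) = omegaP p ^ m := by
  conv_rhs => rw [← Nat.mod_add_div m p, pow_add, pow_mul,
    (omegaP_prim (p := p)).pow_eq_one, one_pow, mul_one]

lemma eP_add (a b : ZMod p) : eP p (a + b) = eP p a * eP p b := by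
  unfold eP
  rw [ZMod.val_add, omegaP_pow_mod, pow_add]

lemma eP_zero : eP p 0 = 1 := by simp [eP, ZMod.val_zero]

lemma dotp_add_left (a b y : Fin n → ZMod p) :
    dotp (a + b) y = dotp a y + dotp b y := by
  simp [dotp, add_mul, Finset.sum_add_distrib]

lemma dotp_add_right (d a b : Fin n → ZMod p) :
    dotp d (a + b) = dotp d a + dotp d b := by
  simp [dotp, mul_add, Finset.sum_add_distrib]

lemma dotp_zero_left (y : Fin n → ZMod p) : dotp (0 : Fin n → ZMod p) y = 0 := by
  simp [dotp]

lemma dotp_zero_right (d : Fin n → ZMod p) : dotp d (0 : Fin n → ZMod p) = 0 := by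
  simp [dotp]

lemma dotp_neg_left (a y : Fin n → ZMod p) : dotp (-a) y = - dotp a y := by
  simp [dotp]

/-- the additive character `y ↦ ω^{d·y}`. -/
noncomputable def psiP (d : Fin n → ZMod p) : AddChar (Fin n → ZMod p) ℂ where
  toFun y := eP p (dotp d y)
  map_zero_eq_one' := by show eP p (dotp d 0) = 1; rw [dotp_zero_right, eP_zero]
  map_add_eq_mul' a b := by
    show eP p (dotp d (a + b)) = eP p (dotp d a) * eP p (dotp d b)
    rw [dotp_add_right, eP_add]

lemma sum_eP_eq (d : Fin n → ZMod p) :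
    ∑ y : Fin n → ZMod p, eP p (dotp d y) = if d = 0 then ((p : ℂ) ^ n) else 0 := by
  split_ifs with hd
  · subst hd
    simp only [dotp_zero_left, eP_zero, Finset.sum_const, Finset.card_univ, nsmul_eq_mul, mul_one]
    simp [ZMod.card]
  · have hψ : (psiP d : AddChar (Fin n → ZMod p) ℂ) ≠ 0 := by
      rw [AddChar.ne_zero_iff]
      obtain ⟨i, hi⟩ : ∃ i, d i ≠ 0 := by
        by_contra h
        push_neg at h
        exact hd (funext h)
      refine ⟨Pi.single i (d i)⁻¹, ?_⟩
      have hdot : dotp d (Pi.single i (d i)⁻¹) = 1 := by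
        simp only [dotp, Pi.single_apply, mul_ite, mul_zero, Finset.sum_ite_eq',
          Finset.mem_univ, if_true]
        exact mul_inv_cancel₀ hi
      show eP p (dotp d (Pi.single i (d i)⁻¹)) ≠ 1
      rw [hdot]
      haveI : Fact (1 < p) := ⟨(Fact.out (p := p.Prime)).one_lt⟩
      have h1 : (1 : ZMod p).val = 1 := ZMod.val_one p
      rw [eP, h1, pow_one]
      exact (omegaP_prim (p := p)).ne_one (Fact.out (p := p.Prime)).one_lt
    have := AddChar.sum_eq_zero_iff_ne_zero.mpr hψ
    simpa [psiP, AddChar.coe_mk] using this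

end Aux

/-- If a nonempty code `C` has trivial translation stabilizer, then the support of its
character sum is not contained in any proper linear subspace of `F_p^n`. -/
theorem stmt9 (p n : ℕ) [Fact p.Prime] (C : Finset (Fin n → ZMod p)) (hne : C.Nonempty)
    (hT : ∀ s : Fin n → ZMod p, C.image (fun c => c + s) = C → s = 0) :
    ¬ ∃ V0 : Submodule (ZMod p) (Fin n → ZMod p), V0 ≠ ⊤ ∧
      {y : Fin n → ZMod p | fsum C y ≠ 0} ⊆ (V0 : Set (Fin n → ZMod p)) := by
  rintro ⟨V0, hV0, hsupp⟩
  obtain ⟨φ, hφne, hφbot⟩ := Submodule.exists_dual_map_eq_bot_of_lt_top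
    (lt_top_iff_ne_top.2 hV0) inferInstance
  set s : Fin n → ZMod p := fun i => φ (Pi.single i 1) with hs
  have hφeq : ∀ y, φ y = dotp s y := by
    intro y
    have hy : y = ∑ i, Pi.single i (y i) := (Finset.univ_sum_single y).symm
    conv_lhs => rw [hy]
    rw [map_sum, dotp]
    refine Finset.sum_congr rfl fun i _ => ?_
    have : Pi.single i (y i) = y i • (Pi.single i (1 : ZMod p) : Fin n → ZMod p) := by
      funext j
      rcases eq_or_ne j i with rfl | hji
      · simp
      · simp [Pi.single_eq_of_ne hji]
    rw [this, map_smul, smul_eq_mul, hs, mul_comm]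
  have hker : ∀ y ∈ V0, dotp s y = 0 := by
    intro y hy
    have : φ y ∈ V0.map φ := Submodule.mem_map_of_mem hy
    rw [hφbot, Submodule.mem_bot] at this
    rw [← hφeq]; exact this
  have hs0 : s ≠ 0 := by
    intro h
    exact hφne (LinearMap.ext fun y => by rw [hφeq y, h, dotp_zero_left]; simp)
  -- Fourier inversion: ∑_y f(y) e((-x)·y) = p^n · 1_C(x)
  have key : ∀ x : Fin n → ZMod p,
      (∑ y : Fin n → ZMod p, fsum C y * eP p (dotp (-x) y)) =
        if x ∈ C then ((p : ℂ) ^ n) else 0 := by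
    intro x
    have : (∑ y : Fin n → ZMod p, fsum C y * eP p (dotp (-x) y)) =
        ∑ c ∈ C, ∑ y : Fin n → ZMod p, eP p (dotp (c - x) y) := by
      simp only [fsum, Finset.sum_mul]
      rw [Finset.sum_comm]
      refine Finset.sum_congr rfl fun c _ => Finset.sum_congr rfl fun y _ => ?_
      rw [sub_eq_add_neg, dotp_add_left, eP_add]
      rfl
    rw [this]
    have : ∀ c ∈ C, (∑ y : Fin n → ZMod p, eP p (dotp (c - x) y)) =
        if c = x then ((p : ℂ) ^ n) else 0 := by
      intro c _
      simp only [sum_eP_eq, sub_eq_zero]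
    rw [Finset.sum_congr rfl this, Finset.sum_ite_eq' C x (fun _ => ((p : ℂ) ^ n))]
  -- translation invariance
  have hpn : ((p : ℂ) ^ n) ≠ 0 := by
    have : (p : ℂ) ≠ 0 := by
      exact_mod_cast (Fact.out (p := p.Prime)).ne_zero
    exact pow_ne_zero n this
  have shift : ∀ x : Fin n → ZMod p, (x + s ∈ C ↔ x ∈ C) := by
    intro x
    have heq : (∑ y : Fin n → ZMod p, fsum C y * eP p (dotp (-(x + s)) y)) =
        ∑ y : Fin n → ZMod p, fsum C y * eP p (dotp (-x) y) := by
      refine Finset.sum_congr rfl fun y _ => ?_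
      by_cases hfy : fsum C y = 0
      · rw [hfy, zero_mul, zero_mul]
      · have hyV : y ∈ V0 := hsupp hfy
        have : dotp (-(x + s)) y = dotp (-x) y := by
          rw [neg_add, dotp_add_left, dotp_neg_left s y, hker y hyV, neg_zero, add_zero]
        rw [this]
    rw [key, key] at heq
    constructor
    · intro h1; by_contra h2; rw [if_pos h1, if_neg h2] at heq; exact hpn heq
    · intro h2; by_contra h1; rw [if_neg h1, if_pos h2] at heq; exact hpn heq.symm
  have himg : C.image (fun c => c + s) = C := by
    ext a
    simp only [Finset.mem_image]
    constructor
    · rintro ⟨c, hc, rfl⟩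
      exact (shift c).2 hc
    · intro ha
      refine ⟨a - s, ?_, by rw [sub_add_cancel]⟩
      rw [← (shift (a - s)), sub_add_cancel]
      exact ha
  exact hs0 (hT s himg)
end
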